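/- arXiv:1807.11283 — 8 statements merged into one kernel-verified Lean document; each statement's English description precedes it below -/
import Mathlib

section
/- In a finite commutative unital ring K, if a, b ∈ K generate the same principal ideal, i.e. aK = bK, then a and b are associated: a = bu for some unit u ∈ K. -/
/-- In a finite monoid, some positive power of every element is idempotent. -/
theorem exists_pow_idem {M : Type*} [Monoid M] [Finite M] (t : M) :
    ∃ n ≥ 1, t ^ n * t ^ n = t ^ n := by
  obtain ⟨i, j, hne, hij⟩ := Finite.exists_ne_map_eq_of_infinite (fun n : ℕ => t ^ (n + 1))
  wlog hlt : i < j generalizing i j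
  · exact this j i hne.symm hij.symm (by omega)
  set k := j - i with hk
  have hk1 : 1 ≤ k := by omega
  have key : ∀ m, i + 1 ≤ m → t ^ m = t ^ (m + k) := by
    intro m hm
    obtain ⟨r, rfl⟩ := Nat.exists_eq_add_of_le hm
    calc t ^ (i + 1 + r) = t ^ (i + 1) * t ^ r := pow_add t (i + 1) r
    _ = t ^ (j + 1) * t ^ r := by rw [hij]
    _ = t ^ (j + 1 + r) := (pow_add t (j + 1) r).symm
    _ = t ^ (i + 1 + r + k) := by rw [show j + 1 + r = i + 1 + r + k by omega]
  have iter : ∀ l m, i + 1 ≤ m → t ^ m = t ^ (m + l * k) := by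
    intro l
    induction l with
    | zero => simp
    | succ l ih =>
      intro m hm
      rw [show m + (l + 1) * k = (m + l * k) + k by ring]
      rw [← key (m + l * k) (by omega)]
      exact ih m hm
  refine ⟨(i + 1) * k, by nlinarith, ?_⟩
  have := iter (i + 1) ((i + 1) * k) (by nlinarith)
  rw [← pow_add]
  exact this.symm

/-- In a finite commutative unital ring, if `a` and `b` generate the same
principal ideal then they are associated: `a = b * u` for some unit `u`. -/
theorem associated_of_span_eq (K : Type*) [CommRing K] [Fintype K] (a b : K)
    (h : Ideal.span ({a} : Set K) = Ideal.span ({b} : Set K)) :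
    ∃ u : Kˣ, a = b * u := by
  have hba : b ∣ a := Ideal.span_singleton_le_span_singleton.mp h.le
  have hab : a ∣ b := Ideal.span_singleton_le_span_singleton.mp h.ge
  obtain ⟨c, hc⟩ := hba
  obtain ⟨d, hd⟩ := hab
  set t := c * d with ht
  clear_value t
  have hbt : b * t = b := by rw [ht, ← mul_assoc, ← hc, ← hd]
  have hbpow : ∀ n : ℕ, b * t ^ n = b := by
    intro n
    induction n with
    | zero => simp
    | succ m ih => rw [pow_succ, ← mul_assoc, ih, hbt]
  obtain ⟨n, hn1, hidem⟩ := exists_pow_idem t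
  obtain ⟨m, rfl⟩ := Nat.exists_eq_add_of_le hn1
  set e := t ^ (1 + m) with he
  clear_value e
  have hee : e * e = e := hidem
  have hbe : b * e = b := by rw [he]; exact hbpow _
  have hae : a * e = a := by
    calc a * e = (b * e) * c := by rw [hc]; ring
    _ = b * c := by rw [hbe]
    _ = a := hc.symm
  set u := c * e + (1 - e) with hu
  set v := d * t ^ m * e + (1 - e) with hv
  have huv : u * v = 1 := by
    have h1 : (c * e) * (d * t ^ m * e) = e := by
      calc (c * e) * (d * t ^ m * e) = (t ^ 1 * t ^ m) * (e * e) := by rw [ht, pow_one]; ring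
      _ = e := by rw [← pow_add, ← he, hee, hee]
    have h2 : (c * e) * (1 - e) = 0 := by
      have h0 : e * (1 - e) = 0 := by rw [mul_sub, hee]; ring
      calc (c * e) * (1 - e) = c * (e * (1 - e)) := by ring
      _ = 0 := by rw [h0, mul_zero]
    have h3 : (1 - e) * (d * t ^ m * e) = 0 := by
      have h0 : (1 - e) * e = 0 := by rw [sub_mul, hee]; ring
      calc (1 - e) * (d * t ^ m * e) = d * t ^ m * ((1 - e) * e) := by ring
      _ = 0 := by rw [h0, mul_zero]
    have h4 : (1 - e) * (1 - e) = 1 - e := by rw [sub_mul, mul_sub, mul_sub, hee]; ring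
    calc u * v = (c * e) * (d * t ^ m * e) + (c * e) * (1 - e)
        + (1 - e) * (d * t ^ m * e) + (1 - e) * (1 - e) := by rw [hu, hv]; ring
    _ = e + 0 + 0 + (1 - e) := by rw [h1, h2, h3, h4]
    _ = 1 := by ring
  have hbu : b * u = a := by
    calc b * u = (b * c) * e + b * (1 - e) := by rw [hu]; ring
    _ = a * e + (b - b * e) := by rw [← hc]; ring
    _ = a := by rw [hae, hbe]; ring
  exact ⟨⟨u, v, huv, by rw [mul_comm]; exact huv⟩, hbu.symm⟩
end

section
/- Up to isomorphism there is a unique graph (possibly with loops) on k+1 vertices whose vertex degrees are exactly 1, 2, ..., k+1, where a loop contributes 1 to the degree; it is realized by the graph on vertices v_0, ..., v_k in which v_i and v_j are adjacent iff i + j ≥ k. -/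
universe u

lemma staircase_key (k : ℕ) : ∀ (V : Type u) [Fintype V] [DecidableEq V]
    (Adj : V → V → Prop) [DecidableRel Adj], Symmetric Adj →
    Fintype.card V = k + 1 →
    ∀ σ : Fin (k + 1) ≃ V,
      (∀ i : Fin (k + 1), (Finset.univ.filter (fun w => Adj (σ i) w)).card = (i : ℕ) + 1) →
      ∀ i j : Fin (k + 1), Adj (σ i) (σ j) ↔ k ≤ (i : ℕ) + (j : ℕ) := by
  induction k using Nat.strong_induction_on with
  | _ k IH =>
  intro V _ _ Adj _ hsymm hcard σ hdeg
  -- the top vertex is adjacent to everything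
  have h_top : ∀ w, Adj (σ ⟨k, by omega⟩) w := by
    intro w
    have h1 := hdeg ⟨k, by omega⟩
    have h2 : (Finset.univ.filter (fun w => Adj (σ ⟨k, by omega⟩) w)) = Finset.univ := by
      apply Finset.eq_univ_of_card
      rw [h1, hcard]
    have := Finset.eq_univ_iff_forall.mp h2 w
    simpa using this
  -- the bottom vertex is adjacent only to the top
  have h_bot : ∀ w, Adj (σ 0) w ↔ w = σ ⟨k, by omega⟩ := by
    have h1 := hdeg 0
    simp only [Fin.val_zero, zero_add] at h1
    obtain ⟨a, ha⟩ := Finset.card_eq_one.mp h1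
    have htopmem : σ ⟨k, by omega⟩ ∈ Finset.univ.filter (fun w => Adj (σ 0) w) := by
      simp only [Finset.mem_filter, Finset.mem_univ, true_and]
      exact hsymm (h_top (σ 0))
    rw [ha, Finset.mem_singleton] at htopmem
    intro w
    constructor
    · intro hw
      have : w ∈ Finset.univ.filter (fun w => Adj (σ 0) w) := by simp [hw]
      rw [ha, Finset.mem_singleton] at this
      rw [this, ← htopmem]
    · intro hw
      subst hw
      exact hsymm (h_top (σ 0))
  match k, IH, hcard, σ, hdeg, h_top, h_bot with
  | 0, IH, hcard, σ, hdeg, h_top, h_bot =>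
    intro i j
    have hi : i = ⟨0, by omega⟩ := Fin.ext (by omega)
    have hj : j = ⟨0, by omega⟩ := Fin.ext (by omega)
    subst hi; subst hj
    simpa using h_top (σ ⟨0, by omega⟩)
  | 1, IH, hcard, σ, hdeg, h_top, h_bot =>
    intro i j
    have hij : ∀ x : Fin (1+1), x = 0 ∨ x = ⟨1, by omega⟩ := by
      intro x
      by_cases h : (x : ℕ) = 0
      · exact Or.inl (Fin.ext h)
      · have hx : (x : ℕ) < 2 := x.isLt
        exact Or.inr (Fin.ext (show (x : ℕ) = 1 by omega))
    rcases hij i with hi | hi <;> rcases hij j with hj | hj <;> subst hi <;> subst hj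
    · constructor
      · intro h
        have := (h_bot (σ 0)).mp h
        have := σ.injective this
        simp [Fin.ext_iff] at this
      · intro h; simp at h
    · simp only [Fin.val_zero]
      constructor
      · intro _; omega
      · intro _; exact hsymm (h_top (σ 0))
    · simp only [Fin.val_zero]
      constructor
      · intro _; omega
      · intro _; exact h_top (σ 0)
    · constructor
      · intro _; simp
      · intro _; exact h_top (σ ⟨1, by omega⟩)
  | (m+2), IH, hcard, σ, hdeg, h_top, h_bot =>
    classical
    have hbt : σ (0 : Fin (m+3)) ≠ σ ⟨m+2, by omega⟩ := by
      intro h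
      have := σ.injective h
      simp [Fin.ext_iff] at this
    have hcard' : Fintype.card {v : V // v ≠ σ 0 ∧ v ≠ σ ⟨m+2, by omega⟩} = m + 1 := by
      rw [Fintype.card_subtype]
      have heq : (Finset.univ.filter fun v : V => v ≠ σ 0 ∧ v ≠ σ ⟨m+2, by omega⟩)
          = Finset.univ \ {σ 0, σ ⟨m+2, by omega⟩} := by
        ext v; simp [not_or]
      rw [heq, Finset.card_sdiff_of_subset (Finset.subset_univ _), Finset.card_univ, hcard,
        Finset.card_insert_of_notMem (by simpa using hbt), Finset.card_singleton]
      omega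
    let f : Fin (m+1) → {v : V // v ≠ σ 0 ∧ v ≠ σ ⟨m+2, by omega⟩} := fun i =>
      ⟨σ ⟨(i : ℕ) + 1, by have := i.isLt; omega⟩, by
        constructor
        · intro h
          have h2 := σ.injective h
          have h3 : (i : ℕ) + 1 = 0 := by
            have h4 := congrArg Fin.val h2
            simp only [Fin.val_zero] at h4
            exact h4
          omega
        · intro h
          have h2 := σ.injective h
          have h3 : (i : ℕ) + 1 = m + 2 := by simpa [Fin.ext_iff] using h2
          have hi := i.isLt
          omega⟩
    have finj : Function.Injective f := by
      intro a b hab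
      have h1 : σ ⟨(a:ℕ)+1, by have := a.isLt; omega⟩ = σ ⟨(b:ℕ)+1, by have := b.isLt; omega⟩ :=
        Subtype.ext_iff.mp hab
      have h2 := σ.injective h1
      have h3 : (a:ℕ)+1 = (b:ℕ)+1 := by simpa [Fin.ext_iff] using h2
      exact Fin.ext (by omega)
    let σ' : Fin (m+1) ≃ {v : V // v ≠ σ 0 ∧ v ≠ σ ⟨m+2, by omega⟩} :=
      Equiv.ofBijective f ((Fintype.bijective_iff_injective_and_card f).mpr
        ⟨finj, by rw [hcard', Fintype.card_fin]⟩)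
    let Adj' : {v : V // v ≠ σ 0 ∧ v ≠ σ ⟨m+2, by omega⟩} →
        {v : V // v ≠ σ 0 ∧ v ≠ σ ⟨m+2, by omega⟩} → Prop := fun a b => Adj a.1 b.1
    haveI : DecidableRel Adj' := fun a b => inferInstanceAs (Decidable (Adj a.1 b.1))
    have hsymm' : Symmetric Adj' := fun a b h => hsymm h
    have hdeg' : ∀ i : Fin (m+1),
        (Finset.univ.filter (fun w => Adj' (σ' i) w)).card = (i : ℕ) + 1 := by
      intro i
      have hS : (Finset.univ.filter
          (fun w => Adj (σ ⟨(i:ℕ)+1, by have := i.isLt; omega⟩) w)).card = (i:ℕ) + 2 :=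
        hdeg ⟨(i:ℕ)+1, by have := i.isLt; omega⟩
      have hxtop : σ ⟨m+2, by omega⟩ ∈ Finset.univ.filter
          (fun w => Adj (σ ⟨(i:ℕ)+1, by have := i.isLt; omega⟩) w) := by
        simp only [Finset.mem_filter, Finset.mem_univ, true_and]
        exact hsymm (h_top _)
      have hxbot : σ 0 ∉ Finset.univ.filter
          (fun w => Adj (σ ⟨(i:ℕ)+1, by have := i.isLt; omega⟩) w) := by
        simp only [Finset.mem_filter, Finset.mem_univ, true_and]
        intro h
        have h2 := (h_bot _).mp (hsymm h)
        have h3 := σ.injective h2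
        have h4 : (i:ℕ)+1 = m+2 := by simpa [Fin.ext_iff] using h3
        have := i.isLt
        omega
      have hbij : (Finset.univ.filter (fun w => Adj' (σ' i) w)).card
          = ((Finset.univ.filter
            (fun w => Adj (σ ⟨(i:ℕ)+1, by have := i.isLt; omega⟩) w)).erase
              (σ ⟨m+2, by omega⟩)).card := by
        apply Finset.card_bij (fun a _ => a.1)
        · intro a ha
          rw [Finset.mem_erase]
          refine ⟨a.2.2, ?_⟩
          simp only [Finset.mem_filter, Finset.mem_univ, true_and]
          exact (Finset.mem_filter.mp ha).2
        · intro a _ b _ h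
          exact Subtype.ext h
        · intro b hb
          rw [Finset.mem_erase] at hb
          obtain ⟨hb1, hb2⟩ := hb
          have hbnot : b ≠ σ 0 := ne_of_mem_of_not_mem hb2 hxbot
          have hb3 : Adj (σ ⟨(i:ℕ)+1, by have := i.isLt; omega⟩) b :=
            (Finset.mem_filter.mp hb2).2
          exact ⟨⟨b, hbnot, hb1⟩, Finset.mem_filter.mpr ⟨Finset.mem_univ _, hb3⟩, rfl⟩
      rw [hbij, Finset.card_erase_of_mem hxtop, hS]
      omega
    have hIH := IH m (by omega) _ Adj' hsymm' (by rw [hcard']) σ' hdeg'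
    intro i j
    by_cases hi2 : (i : ℕ) = m + 2
    · constructor
      · intro _; omega
      · intro _
        rw [show i = (⟨m+2, by omega⟩ : Fin (m+3)) from Fin.ext hi2]
        exact h_top (σ j)
    by_cases hj2 : (j : ℕ) = m + 2
    · constructor
      · intro _; omega
      · intro _
        rw [show j = (⟨m+2, by omega⟩ : Fin (m+3)) from Fin.ext hj2]
        exact hsymm (h_top (σ i))
    have hi3 : (i:ℕ) < m + 2 := by have := i.isLt; omega
    have hj3 : (j:ℕ) < m + 2 := by have := j.isLt; omega
    by_cases hi0 : (i:ℕ) = 0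
    · rw [show i = (0 : Fin (m+3)) from Fin.ext hi0]
      constructor
      · intro h
        have h2 := (h_bot _).mp h
        have h3 := σ.injective h2
        have h4 : (j:ℕ) = m+2 := by simpa [Fin.ext_iff] using h3
        omega
      · intro h
        exfalso
        simp only [Fin.val_zero] at h
        omega
    by_cases hj0 : (j:ℕ) = 0
    · rw [show j = (0 : Fin (m+3)) from Fin.ext hj0]
      constructor
      · intro h
        have h2 := (h_bot _).mp (hsymm h)
        have h3 := σ.injective h2
        have h4 : (i:ℕ) = m+2 := by simpa [Fin.ext_iff] using h3
        omega
      · intro h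
        exfalso
        simp only [Fin.val_zero] at h
        omega
    have hIH2 := hIH ⟨(i:ℕ) - 1, by omega⟩ ⟨(j:ℕ) - 1, by omega⟩
    have hσi : σ i = (σ' ⟨(i:ℕ) - 1, by omega⟩).1 := by
      show σ i = σ ⟨((i:ℕ) - 1) + 1, by omega⟩
      congr 1
      exact Fin.ext (by simp; omega)
    have hσj : σ j = (σ' ⟨(j:ℕ) - 1, by omega⟩).1 := by
      show σ j = σ ⟨((j:ℕ) - 1) + 1, by omega⟩
      congr 1
      exact Fin.ext (by simp; omega)
    rw [hσi, hσj]
    have heq : Adj (σ' ⟨(i:ℕ) - 1, by omega⟩).1 (σ' ⟨(j:ℕ) - 1, by omega⟩).1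
        ↔ m ≤ ((i:ℕ) - 1) + ((j:ℕ) - 1) := hIH2
    rw [heq]
    omega

/-- Up to isomorphism there is a unique graph (loops allowed) on `k + 1`
vertices whose vertex degrees are exactly `1, 2, ..., k + 1` (a loop
contributing `1` to the degree); it is realized by the staircase graph `SG_k`
on `Fin (k+1)` in which `i` and `j` are adjacent iff `i + j ≥ k`. -/
theorem staircase_unique (k : ℕ) (V : Type*) [Fintype V] [DecidableEq V]
    (Adj : V → V → Prop) [DecidableRel Adj] (hsymm : Symmetric Adj)
    (hcard : Fintype.card V = k + 1)
    (hdeg : ∃ σ : Fin (k + 1) ≃ V,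
      ∀ i : Fin (k + 1), (Finset.univ.filter (fun w => Adj (σ i) w)).card = (i : ℕ) + 1) :
    ∃ φ : V ≃ Fin (k + 1), ∀ a b : V, Adj a b ↔ k ≤ (φ a : ℕ) + (φ b : ℕ) := by
  obtain ⟨σ, hσ⟩ := hdeg
  refine ⟨σ.symm, fun a b => ?_⟩
  have := staircase_key k V Adj hsymm hcard σ hσ (σ.symm a) (σ.symm b)
  simpa using this
end

section
/- For a prime p and a nonnegative integer k, the compressed zero-divisor graph Θ(ℤ_{p^k}) is isomorphic to the staircase graph SG_k: its vertices are the classes [p^0], [p^1], ..., [p^k], and [p^i] is adjacent to [p^j] iff i + j ≥ k. -/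
/-- For a prime `p` and `k ≥ 0`, the compressed zero-divisor graph
`Θ(ℤ_{p^k})` is isomorphic to the staircase graph `SG_k`: its vertices (the
associatedness classes) are `[p^0], ..., [p^k]`, and `[p^i]` is adjacent to
`[p^j]` iff `i + j ≥ k`. -/
theorem theta_zmod_prime_pow (p k : ℕ) (hp : p.Prime) :
    ∃ e : Associates (ZMod (p ^ k)) ≃ Fin (k + 1),
      (∀ i : Fin (k + 1), e (Associates.mk ((p : ZMod (p ^ k)) ^ (i : ℕ))) = i) ∧
      (∀ a b : ZMod (p ^ k),
        a * b = 0 ↔ k ≤ (e (Associates.mk a) : ℕ) + (e (Associates.mk b) : ℕ)) := by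
  have hp1 : 1 < p := hp.one_lt
  haveI hn : NeZero (p ^ k) := ⟨pow_ne_zero _ hp.pos.ne'⟩
  set R := ZMod (p ^ k) with hR
  have hzero : ∀ m : ℕ, ((p : R) ^ m = 0 ↔ k ≤ m) := by
    intro m
    rw [← Nat.cast_pow, ZMod.natCast_eq_zero_iff,
      Nat.pow_dvd_pow_iff_le_right hp1]
  set v : R → ℕ := fun a => if a = 0 then k else padicValNat p a.val with hv
  have hvle : ∀ a, v a ≤ k := by
    intro a
    by_cases ha : a = 0
    · simp [hv, ha]
    · have hval : a.val ≠ 0 := fun h => ha ((ZMod.val_eq_zero a).mp h)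
      have hd : p ^ padicValNat p a.val ∣ a.val := pow_padicValNat_dvd
      have h1 : p ^ padicValNat p a.val ≤ a.val := Nat.le_of_dvd (Nat.pos_of_ne_zero hval) hd
      have h2 : a.val < p ^ k := ZMod.val_lt a
      have := (Nat.pow_lt_pow_iff_right hp1).mp (lt_of_le_of_lt h1 h2)
      simp [hv, ha, this.le]
  have hA : ∀ a : R, Associated ((p : R) ^ v a) a := by
    intro a
    by_cases ha : a = 0
    · have : (p : R) ^ v a = 0 := by
        rw [hzero]; simp [hv, ha]
      rw [this, ha]
    · have hval : a.val ≠ 0 := fun h => ha ((ZMod.val_eq_zero a).mp h)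
      set m := a.val / p ^ (a.val).factorization p with hm
      have hfac : (a.val).factorization p = padicValNat p a.val :=
        Nat.factorization_def a.val hp
      have hmul : p ^ (a.val).factorization p * m = a.val :=
        Nat.ordProj_mul_ordCompl_eq_self a.val p
      have hpm : ¬ p ∣ m := Nat.not_dvd_ordCompl hp hval
      have hcop : Nat.Coprime m (p ^ k) :=
        (Nat.Coprime.pow_right k (((Nat.Prime.coprime_iff_not_dvd hp).mpr hpm).symm))
      refine ⟨ZMod.unitOfCoprime m hcop, ?_⟩
      have : ((p : R) ^ v a) * (m : R) = a := by
        have h1 : v a = padicValNat p a.val := by simp [hv, ha]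
        rw [h1, ← hfac, ← Nat.cast_pow, ← Nat.cast_mul, hmul]
        rw [ZMod.natCast_val]
        exact ZMod.cast_id _ _
      simpa [ZMod.coe_unitOfCoprime] using this
  have hB : ∀ i, i ≤ k → ∀ j, j ≤ k → Associated ((p:R)^i) ((p:R)^j) → i = j := by
    have key : ∀ i j, i < j → j ≤ k → ¬ Associated ((p:R)^i) ((p:R)^j) := by
      intro i j hij hjk ⟨u, hu⟩
      have hnil : IsNilpotent ((p:R) ^ (j - i) * ((u⁻¹ : Rˣ) : R)) := by
        have h0 : IsNilpotent ((p:R) ^ (j-i)) := ⟨k, by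
          rw [← pow_mul, hzero]
          exact le_mul_of_one_le_left (Nat.zero_le _) (Nat.one_le_iff_ne_zero.mpr (Nat.sub_ne_zero_of_lt hij))⟩
        exact (Commute.all _ _).isNilpotent_mul_right h0
      have hunit : IsUnit (1 - (p:R) ^ (j - i) * ((u⁻¹ : Rˣ) : R)) := IsNilpotent.isUnit_one_sub hnil
      have hju : (p:R)^j * ((u⁻¹ : Rˣ) : R) = (p:R)^i := by
        rw [← hu, mul_assoc, Units.mul_inv, mul_one]
      have heq : (p:R)^i * (1 - (p:R) ^ (j - i) * ((u⁻¹ : Rˣ) : R)) = 0 := by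
        have hsplit : (p:R)^i * (p:R)^(j-i) = (p:R)^j := by
          rw [← pow_add, Nat.add_sub_cancel' hij.le]
        rw [mul_sub, mul_one, ← mul_assoc, hsplit, hju, sub_self]
      have hpi0 : (p:R)^i = 0 := by
        obtain ⟨w, hw⟩ := hunit
        rw [← hw] at heq
        exact (Units.mul_left_eq_zero w).mp heq
      have := (hzero i).mp hpi0
      omega
    intro i hi j hj hass
    rcases lt_trichotomy i j with h | h | h
    · exact absurd hass (key i j h hj)
    · exact h
    · exact absurd hass.symm (key j i h hi)
  have hwd : ∀ a b : R, Associated a b → v a = v b := by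
    intro a b hab
    exact hB _ (hvle a) _ (hvle b) (((hA a).trans hab).trans (hA b).symm)
  let f : Associates R → Fin (k+1) :=
    Quotient.lift (fun a => (⟨v a, Nat.lt_succ_of_le (hvle a)⟩ : Fin (k+1))) 
      (fun a b hab => Fin.mk_eq_mk.mpr (hwd a b hab))
  have hfmk : ∀ a : R, f (Associates.mk a) = ⟨v a, Nat.lt_succ_of_le (hvle a)⟩ := fun a => rfl
  have hvpow : ∀ i : ℕ, i ≤ k → v ((p:R)^i) = i := by
    intro i hik
    exact hB _ (hvle _) _ hik (hA ((p:R)^i))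
  let g : Fin (k+1) → Associates R := fun i => Associates.mk ((p:R)^(i:ℕ))
  have hgf : Function.LeftInverse g f := by
    intro x
    induction x using Quotient.inductionOn with
    | h a =>
      show Associates.mk ((p:R)^(v a)) = Associates.mk a
      exact Associates.mk_eq_mk_iff_associated.mpr (hA a)
  have hfg : Function.RightInverse g f := by
    intro i
    apply Fin.ext
    show v ((p:R)^(i:ℕ)) = (i : ℕ)
    exact hvpow i (Nat.lt_succ_iff.mp i.isLt)
  refine ⟨⟨f, g, hgf, hfg⟩, ?_, ?_⟩
  · intro i; exact hfg i
  · intro a b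
    obtain ⟨u, hu⟩ := hA a
    obtain ⟨w, hw⟩ := hA b
    have hab : a * b = (p:R)^(v a + v b) * ((u : R) * (w : R)) := by
      conv_lhs => rw [← hu, ← hw]
      rw [pow_add]; ring
    have h2 : a * b = 0 ↔ (p:R)^(v a + v b) = 0 := by
      rw [hab, ← Units.val_mul, Units.mul_left_eq_zero]
    rw [h2, hzero]
    rfl
end

section
/- For finite commutative unital rings K and L, the compressed zero-divisor graph Θ(K × L) is isomorphic to the tensor (categorical) product of graphs Θ(K) × Θ(L), via [(x,y)] ↦ ([x],[y]). -/
lemma associated_pair {K L : Type*} [CommRing K] [CommRing L]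
    {x x' : K} {y y' : L} (h1 : Associated x x') (h2 : Associated y y') :
    Associated (x, y) (x', y') := by
  obtain ⟨u, hu⟩ := h1
  obtain ⟨v, hv⟩ := h2
  refine ⟨MulEquiv.prodUnits.symm (u, v), ?_⟩
  have : ((MulEquiv.prodUnits.symm (u, v) : (K × L)ˣ) : K × L) = ((u : K), (v : L)) := rfl
  rw [this]
  exact Prod.ext hu hv

/-- For finite commutative unital rings `K` and `L`, the compressed
zero-divisor graph `Θ(K × L)` is isomorphic to the tensor product of graphs
`Θ(K) × Θ(L)` via `[(x, y)] ↦ ([x], [y])`: associatedness classes of the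
product correspond to pairs of classes, and `(x, y) * (z, w) = 0` iff both
`x * z = 0` and `y * w = 0`. -/
theorem theta_preserves_products (K L : Type*) [CommRing K] [CommRing L]
    [Fintype K] [Fintype L] :
    (∃ e : Associates (K × L) ≃ Associates K × Associates L,
      ∀ x : K, ∀ y : L, e (Associates.mk (x, y)) = (Associates.mk x, Associates.mk y)) ∧
    (∀ a b : K × L, a * b = 0 ↔ (a.1 * b.1 = 0 ∧ a.2 * b.2 = 0)) := by
  constructor
  · refine ⟨{
      toFun := Quotient.lift (fun a : K × L => (Associates.mk a.1, Associates.mk a.2))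
        (fun a b h => Prod.ext (Quotient.sound (h.map (MonoidHom.fst K L)))
          (Quotient.sound (h.map (MonoidHom.snd K L))))
      invFun := fun p => Quotient.liftOn₂ p.1 p.2 (fun x y => Associates.mk (x, y))
        (fun _ _ _ _ h1 h2 => Quotient.sound (associated_pair h1 h2))
      left_inv := ?_
      right_inv := ?_ }, fun _ _ => rfl⟩
    · rintro ⟨⟨x, y⟩⟩; rfl
    · rintro ⟨⟨x⟩, ⟨y⟩⟩; rfl
  · intro a b
    constructor
    · intro h
      exact ⟨congrArg Prod.fst h, congrArg Prod.snd h⟩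
    · intro ⟨h1, h2⟩
      exact Prod.ext h1 h2
end

section
/- Let K be a finite commutative unital local ring and let a, b ∈ K be elements that are neither zero nor units. Then in Θ(K), N([a]) ∪ N([b]) is a proper subset of N([ab]); equivalently, ann(a) ∪ ann(b) ⊊ ann(ab) as subsets of K. -/
private lemma nilp_of_nonunit {K : Type*} [CommRing K] [Fintype K] [IsLocalRing K]
    {x : K} (hx : ¬IsUnit x) : IsNilpotent x := by
  obtain ⟨m, n, hmn, h⟩ := Finite.exists_ne_map_eq_of_infinite (fun k : ℕ => x ^ k)
  wlog hlt : m < n generalizing m n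
  · exact this n m hmn.symm h.symm (by omega)
  have hnm : ¬IsUnit (x ^ (n - m)) := by
    intro hu
    exact hx (isUnit_of_dvd_unit (dvd_pow_self x (by omega)) hu)
  have hu : IsUnit (1 - x ^ (n - m)) :=
    IsLocalRing.isUnit_one_sub_self_of_mem_nonunits _ hnm
  have hz : x ^ m * (1 - x ^ (n - m)) = 0 := by
    have : x ^ m * x ^ (n - m) = x ^ n := by rw [← pow_add]; congr 1; omega
    rw [mul_sub, mul_one, this, h]; ring
  exact ⟨m, hu.mul_left_eq_zero.mp hz⟩

private lemma key_lemma {K : Type*} [CommRing K] [Fintype K] [IsLocalRing K]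
    {a b : K} (ha0 : a ≠ 0) (hb : ¬IsUnit b) :
    ∃ x : K, a * b * x = 0 ∧ a * x ≠ 0 := by
  by_contra h
  push_neg at h
  obtain ⟨n, hn⟩ := nilp_of_nonunit hb
  have key : ∀ k : ℕ, a * b ^ k = 0 → a = 0 := by
    intro k
    induction k with
    | zero => intro h; rwa [pow_zero, mul_one] at h
    | succ k ih =>
      intro hk
      exact ih (h (b ^ k) (by rw [mul_assoc, ← pow_succ']; exact hk))
  exact ha0 (key n (by rw [hn, mul_zero]))

/-- In a finite commutative unital local ring, if `a` and `b` are neither zero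
nor units, then `ann a ∪ ann b` is a proper subset of `ann (a * b)`. -/
theorem local_ann_strict (K : Type*) [CommRing K] [Fintype K] [IsLocalRing K]
    (a b : K) (ha0 : a ≠ 0) (ha : ¬IsUnit a) (hb0 : b ≠ 0) (hb : ¬IsUnit b) :
    ({y : K | a * y = 0} ∪ {y : K | b * y = 0}) ⊂ {y : K | a * b * y = 0} := by
  constructor
  · rintro y (hy | hy) <;> simp only [Set.mem_setOf_eq] at *
    · rw [mul_assoc, mul_comm b y, ← mul_assoc, hy, zero_mul]
    · rw [mul_assoc, hy, mul_zero]
  · intro hsub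
    obtain ⟨x, hx1, hx2⟩ := key_lemma ha0 hb
    obtain ⟨y, hy1, hy2⟩ := key_lemma hb0 ha
    have hy1' : a * b * y = 0 := by rw [mul_comm a b]; exact hy1
    by_cases hbx : b * x = 0
    · by_cases hay : a * y = 0
      · have hmem : x + y ∈ ({y : K | a * y = 0} ∪ {y : K | b * y = 0}) :=
          hsub (by simp only [Set.mem_setOf_eq, mul_add, hx1, hy1', add_zero])
        rcases hmem with hm | hm <;> simp only [Set.mem_setOf_eq, mul_add] at hm
        · rw [hay, add_zero] at hm; exact hx2 hm
        · rw [hbx, zero_add] at hm; exact hy2 hm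
      · rcases hsub (Set.mem_setOf_eq ▸ hy1' : y ∈ {y : K | a * b * y = 0}) with hm | hm
        · exact hay hm
        · exact hy2 hm
    · rcases hsub (Set.mem_setOf_eq ▸ hx1 : x ∈ {y : K | a * b * y = 0}) with hm | hm
      · exact hx2 hm
      · exact hbx hm
end

section
/- If K is a finite commutative unital ring that is not local, then there exists a ∈ K with a neither 0 nor a unit such that ann(a²) = ann(a). Equivalently, the strict containment property N([a]) ∪ N([b]) ⊊ N([ab]) for all non-trivial classes characterizes local rings among finite commutative unital rings. -/
section Aux
variable {K : Type*} [CommRing K] [Fintype K]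

/-- In a finite ring, some positive power of any nonunit is idempotent. -/
lemma aux_pow_idem {a : K} (ha : ¬IsUnit a) : ∃ n, 1 ≤ n ∧ a ^ (2 * n) = a ^ n := by
  obtain ⟨i, j, hne, hij⟩ := Finite.exists_ne_map_eq_of_infinite (fun n : ℕ => a ^ n)
  wlog hlt : i < j generalizing i j
  · exact this j i hne.symm hij.symm (by omega)
  -- i ≥ 1, else a is a unit
  rcases Nat.eq_zero_or_pos i with rfl | hi
  · exfalso
    apply ha
    refine IsUnit.of_mul_eq_one (a := a) (a ^ (j - 1)) ?_
    rw [← pow_succ', Nat.sub_add_cancel hlt, ← hij, pow_zero]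
  · set d := j - i with hd
    have hd1 : 1 ≤ d := by omega
    have key : ∀ m, i ≤ m → a ^ (m + d) = a ^ m := by
      intro m hm
      have : a ^ (i + d) = a ^ i := by
        rw [hd, Nat.add_sub_cancel' hlt.le]; exact hij.symm
      calc a ^ (m + d) = a ^ (m - i) * a ^ (i + d) := by
            rw [← pow_add]; congr 1; omega
        _ = a ^ (m - i) * a ^ i := by rw [this]
        _ = a ^ m := by rw [← pow_add]; congr 1; omega
    have key2 : ∀ k, a ^ (i * d + k * d) = a ^ (i * d) := by
      intro k
      induction k with
      | zero => simp
      | succ k ih =>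
        have : i * d + (k + 1) * d = (i * d + k * d) + d := by ring
        rw [this, key _ (by nlinarith), ih]
    refine ⟨i * d, by nlinarith, ?_⟩
    have := key2 i
    rw [← this]; ring_nf
end Aux

section Aux
variable {K : Type*} [CommRing K] [Fintype K]

/-- In a finite local ring, every nonunit is nilpotent. -/
lemma aux_nilp [IsLocalRing K] {a : K} (ha : ¬IsUnit a) : IsNilpotent a := by
  obtain ⟨n, hn, h2⟩ := aux_pow_idem ha
  have he : ¬IsUnit (a ^ n) := fun h => ha ((isUnit_pow_iff (by omega)).mp h)
  have h1 : IsUnit (1 - a ^ n) := (IsLocalRing.isUnit_or_isUnit_one_sub_self _).resolve_left he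
  refine ⟨n, ?_⟩
  have : a ^ n * (1 - a ^ n) = 0 := by
    rw [mul_sub, mul_one, ← pow_add, ← two_mul, h2, sub_self]
  obtain ⟨u, hu⟩ := h1
  have := congrArg (fun x => x * (↑u⁻¹ : K)) this
  simpa [← hu, mul_assoc] using this

/-- The union trick: key existence for the forward direction. -/
lemma aux_forward [IsLocalRing K] {a b : K} (ha0 : a ≠ 0) (ha : ¬IsUnit a)
    (hb0 : b ≠ 0) (hb : ¬IsUnit b) :
    ({y : K | a * y = 0} ∪ {y : K | b * y = 0}) ⊂ {y : K | a * b * y = 0} := by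
  have hsub : ({y : K | a * y = 0} ∪ {y : K | b * y = 0}) ⊆ {y : K | a * b * y = 0} := by
    rintro y (hy | hy) <;> simp only [Set.mem_setOf_eq] at *
    · rw [mul_comm a b, mul_assoc, hy, mul_zero]
    · rw [mul_assoc, hy, mul_zero]
  rw [Set.ssubset_iff_of_subset hsub]
  -- find u with a*b*u = 0 but a*u ≠ 0
  have exw : ∀ x z : K, x ≠ 0 → IsNilpotent z → ∃ u, x * z * u = 0 ∧ x * u ≠ 0 := by
    intro x z hx0 hz
    obtain ⟨m, hm⟩ := hz
    have hex : ∃ k, x * z ^ k = 0 := ⟨m, by rw [hm, mul_zero]⟩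
    classical
    set n := Nat.find hex with hn
    have hn0 : x * z ^ n = 0 := Nat.find_spec hex
    have hn1 : 1 ≤ n := by
      rcases Nat.eq_zero_or_pos n with h | h
      · exfalso; apply hx0; simpa [h] using hn0
      · exact h
    refine ⟨z ^ (n - 1), ?_, ?_⟩
    · rw [mul_assoc, ← pow_succ', Nat.sub_add_cancel hn1]; exact hn0
    · exact Nat.find_min hex (by omega)
  obtain ⟨u, hu0, hu⟩ := exw a b ha0 (aux_nilp hb)
  obtain ⟨v, hv0, hv⟩ := exw b a hb0 (aux_nilp ha)
  have hv0' : a * b * v = 0 := by rw [mul_comm a b]; exact hv0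
  by_cases hub : b * u = 0
  · by_cases hva : a * v = 0
    · refine ⟨u + v, ?_, ?_⟩
      · simp only [Set.mem_setOf_eq, mul_add, hu0, hv0', add_zero]
      · rintro (h | h) <;> simp only [Set.mem_setOf_eq, mul_add] at h
        · apply hu; have := congrArg (fun x => x - a * v) h; simpa [hva] using h
        · apply hv; simpa [hub] using h
    · exact ⟨v, hv0', by rintro (h | h) <;> [exact hva h; exact hv h]⟩
  · exact ⟨u, hu0, by rintro (h | h) <;> [exact hu h; exact hub h]⟩
end Aux

/-- If a finite commutative unital ring is not local, then some element `a`,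
neither zero nor a unit, satisfies `ann (a²) = ann a`. Equivalently, the strict
containment property `ann a ∪ ann b ⊊ ann (a * b)` for all nontrivial elements
characterizes local rings among finite commutative unital rings. -/
theorem not_local_ann_eq (K : Type*) [CommRing K] [Fintype K] [Nontrivial K] :
    (¬IsLocalRing K → ∃ a : K, a ≠ 0 ∧ ¬IsUnit a ∧
        {y : K | a ^ 2 * y = 0} = {y : K | a * y = 0}) ∧
    (IsLocalRing K ↔ ∀ a b : K, a ≠ 0 → ¬IsUnit a → b ≠ 0 → ¬IsUnit b →
        ({y : K | a * y = 0} ∪ {y : K | b * y = 0}) ⊂ {y : K | a * b * y = 0}) := by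
  have part1 : ¬IsLocalRing K → ∃ a : K, a ≠ 0 ∧ ¬IsUnit a ∧
      {y : K | a ^ 2 * y = 0} = {y : K | a * y = 0} := by
    intro hnl
    have hex : ∃ a : K, ¬IsUnit a ∧ ¬IsNilpotent a := by
      by_contra h
      push_neg at h
      exact hnl (IsLocalRing.of_isUnit_or_isUnit_one_sub_self fun a =>
        (em (IsUnit a)).imp id fun ha => (h a ha).isUnit_one_sub)
    obtain ⟨a, ha, hnil⟩ := hex
    obtain ⟨n, hn, h2⟩ := aux_pow_idem ha
    refine ⟨a ^ n, fun h => hnil ⟨n, h⟩,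
      fun h => ha ((isUnit_pow_iff (by omega)).mp h), ?_⟩
    have hi : (a ^ n) ^ 2 = a ^ n := by rw [← pow_mul, mul_comm]; exact h2
    rw [hi]
  refine ⟨part1, ⟨fun hl a b ha0 ha hb0 hb => ?_, fun hp => ?_⟩⟩
  · exact aux_forward ha0 ha hb0 hb
  · by_contra hnl
    obtain ⟨a, h0, hu, heq⟩ := part1 hnl
    have := hp a a h0 hu h0 hu
    rw [← pow_two, heq, Set.union_self] at this
    exact this.ne rfl
end

section
/- Let K be a finite commutative unital local ring which is not a field, and suppose a ∈ K, a not a unit, is such that |ann(a)| ≤ |ann(c)| for every non-unit c ∈ K with c not associated to 1. Then a is irreducible: a cannot be written as a = bc with b and c both non-units. -/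
/-- In a finite commutative unital local ring which is not a field, a non-unit
`a` whose annihilator has least cardinality among annihilators of non-units is
irreducible: it is not a product of two non-units. -/
theorem least_degree_irreducible (K : Type*) [CommRing K] [Fintype K]
    [IsLocalRing K] (hK : ¬IsField K) (a : K) (ha : ¬IsUnit a)
    (hmin : ∀ c : K, ¬IsUnit c → {y : K | a * y = 0}.ncard ≤ {y : K | c * y = 0}.ncard) :
    ¬∃ b c : K, ¬IsUnit b ∧ ¬IsUnit c ∧ a = b * c := by
  classical
  rintro ⟨b, c, hb, hc, habc⟩
  -- c is nilpotent
  obtain ⟨n, hn⟩ : IsNilpotent (IsLocalRing.maximalIdeal K) := by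
    have h := IsArtinianRing.isNilpotent_jacobson_bot (R := K)
    rwa [IsLocalRing.jacobson_eq_maximalIdeal ⊥ bot_ne_top] at h
  have hcn : c ^ n = 0 := by
    have hmem : c ^ n ∈ (IsLocalRing.maximalIdeal K) ^ n :=
      Ideal.pow_mem_pow hc n
    rw [hn] at hmem
    simpa using hmem
  by_cases hb0 : b = 0
  · -- then a = 0, and we show K is a field, contradiction
    subst hb0
    rw [zero_mul] at habc
    subst habc
    apply hK
    refine ⟨exists_pair_ne K, mul_comm, fun {x} hx => ?_⟩
    by_cases hxu : IsUnit x
    · obtain ⟨u, rfl⟩ := hxu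
      exact ⟨u.inv, u.val_inv⟩
    · exfalso
      have h := hmin x hxu
      have h1 : {y : K | (0 : K) * y = 0} = Set.univ := by
        ext y; simp
      rw [h1] at h
      have hsub : {y : K | x * y = 0} ⊆ Set.univ := Set.subset_univ _
      have heq : {y : K | x * y = 0} = Set.univ :=
        Set.eq_of_subset_of_ncard_le hsub h (Set.finite_univ)
      have h1' : (1 : K) ∈ {y : K | x * y = 0} := heq ▸ Set.mem_univ 1
      simp only [Set.mem_setOf_eq, mul_one] at h1'
      exact hx h1'
  · -- b ≠ 0
    have hex : ∃ k, b * c ^ k = 0 := ⟨n, by rw [hcn, mul_zero]⟩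
    set n₀ := Nat.find hex with hn₀
    have hfind : b * c ^ n₀ = 0 := Nat.find_spec hex
    have hn₀pos : 0 < n₀ := by
      rcases Nat.eq_zero_or_pos n₀ with h0 | h
      · exfalso; apply hb0; have := hfind; rw [h0] at this; simpa using this
      · exact h
    -- ann b ⊆ ann a
    have hsub : {y : K | b * y = 0} ⊆ {y : K | a * y = 0} := by
      intro y hy
      simp only [Set.mem_setOf_eq] at hy ⊢
      rw [habc, mul_comm b c, mul_assoc, hy, mul_zero]
    have heq : {y : K | b * y = 0} = {y : K | a * y = 0} :=
      Set.eq_of_subset_of_ncard_le hsub (hmin b hb) (Set.toFinite _)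
    -- c ^ (n₀ - 1) ∈ ann a
    have hmem : c ^ (n₀ - 1) ∈ {y : K | a * y = 0} := by
      simp only [Set.mem_setOf_eq]
      rw [habc, mul_assoc, ← pow_succ', Nat.sub_add_cancel hn₀pos]
      exact hfind
    rw [← heq] at hmem
    simp only [Set.mem_setOf_eq] at hmem
    exact Nat.find_min hex (Nat.sub_lt hn₀pos one_pos) hmem
end

section
/- Let K be a finite commutative unital local ring whose distinct associatedness classes can be ordered [a_0], ..., [a_n] with ann(a_0) ⊊ ann(a_1) ⊊ ... ⊊ ann(a_n) (i.e. Θ(K) ≅ SG_n). Then [a_i] = [a_1^i] for all 0 ≤ i ≤ n; in particular every element of K is associated to a power of a_1, and every ideal of K is principal, generated by a power of a_1. -/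
set_option maxHeartbeats 2000000 in
/-- Let `K` be a finite commutative unital local ring whose associatedness
classes can be ordered `[a_0], ..., [a_n]` with strictly increasing
annihilators (i.e. `Θ(K) ≅ SG_n`). Then `[a_i] = [a_1 ^ i]` for all `i`, and
every ideal of `K` is principal, generated by a power of `a_1`. -/
theorem staircase_labeling (K : Type*) [CommRing K] [Fintype K] [IsLocalRing K]
    (n : ℕ) (a : Fin (n + 1) → K)
    (hcover : ∀ x : K, ∃ i : Fin (n + 1), Associated x (a i))
    (hchain : ∀ i j : Fin (n + 1), i < j →
      {y : K | a i * y = 0} ⊂ {y : K | a j * y = 0}) :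
    (∀ i : Fin (n + 1), Associated (a i) ((a 1) ^ (i : ℕ))) ∧
      (∀ I : Ideal K, ∃ k : ℕ, I = Ideal.span {(a 1) ^ k}) := by
  classical
  -- annihilators are invariants of association
  have annEq : ∀ {x y : K}, Associated x y → ∀ z : K, (x * z = 0 ↔ y * z = 0) := by
    rintro x y ⟨u, rfl⟩ z
    constructor
    · intro h
      have : x * ↑u * z = x * z * ↑u := by ring
      rw [this, h, zero_mul]
    · intro h
      have h2 : x * ↑u * z * ↑u⁻¹ = x * z * (↑u * ↑u⁻¹) := by ring
      rw [h, zero_mul, u.mul_inv, mul_one] at h2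
      exact h2.symm
  -- comparing indices via annihilator inclusion
  have idxLe : ∀ {x y : K} {i j : Fin (n + 1)}, Associated x (a i) → Associated y (a j) →
      (∀ z, x * z = 0 → y * z = 0) → i ≤ j := by
    intro x y i j hx hy hsub
    by_contra h
    push_neg at h
    have hss := hchain j i h
    rw [Set.ssubset_def] at hss
    apply hss.2
    intro z hz
    have hxz : x * z = 0 := (annEq hx z).2 hz
    exact (annEq hy z).1 (hsub z hxz)
  have idxEq : ∀ {x : K} {i j : Fin (n + 1)}, Associated x (a i) → Associated x (a j) →
      i = j := by
    intro x i j h1 h2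
    exact le_antisymm (idxLe h1 h2 fun z h => h) (idxLe h2 h1 fun z h => h)
  have annMono : ∀ {i j : Fin (n + 1)}, i ≤ j → ∀ z : K, a i * z = 0 → a j * z = 0 := by
    intro i j hij z hz
    rcases eq_or_lt_of_le hij with rfl | h
    · exact hz
    · have hss := hchain _ _ h
      rw [Set.ssubset_def] at hss
      exact hss.1 hz
  have hzero : ∀ {y : K}, Associated 0 y → y = 0 := by
    rintro y ⟨u, rfl⟩; simp
  obtain ⟨i0, hi0⟩ := hcover 1
  obtain ⟨j0, hj0⟩ := hcover 0
  have hj0' : a j0 = 0 := hzero hj0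
  have hn : 0 < n := by
    rcases Nat.eq_zero_or_pos n with h | h
    · exfalso
      subst h
      have hij : i0 = j0 := by
        have h1 := i0.isLt
        have h2 := j0.isLt
        apply Fin.ext
        omega
      rw [hij, hj0'] at hi0
      exact not_isUnit_zero (associated_one_iff_isUnit.mp hi0.symm)
    · exact h
  -- a n = 0
  have hjn : j0 = ⟨n, by omega⟩ := by
    by_contra h
    have hv : (j0 : ℕ) ≠ n := fun hv => h (Fin.ext hv)
    have hisLt := j0.isLt
    have hlt : j0 < (⟨n, by omega⟩ : Fin (n + 1)) := by
      rw [Fin.lt_def]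
      show (j0 : ℕ) < n
      omega
    have hss := hchain j0 _ hlt
    rw [Set.ssubset_def] at hss
    apply hss.2
    intro z _
    show a j0 * z = 0
    rw [hj0', zero_mul]
  have haN : a ⟨n, by omega⟩ = 0 := by rw [← hjn]; exact hj0'
  -- a 0 is (associated to) 1
  have hi00 : i0 = ⟨0, by omega⟩ := by
    by_contra h
    have hv : (i0 : ℕ) ≠ 0 := fun hv => h (Fin.ext hv)
    have hlt : (⟨0, by omega⟩ : Fin (n + 1)) < i0 := by
      rw [Fin.lt_def]
      show 0 < (i0 : ℕ)
      omega
    have hss := hchain _ i0 hlt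
    rw [Set.ssubset_def] at hss
    apply hss.2
    intro z hz
    have hu : IsUnit (a i0) := associated_one_iff_isUnit.mp hi0.symm
    have hz0 : z = 0 := (hu.mul_right_eq_zero).mp hz
    show a _ * z = 0
    rw [hz0, mul_zero]
  have ha0assoc : Associated 1 (a ⟨0, by omega⟩) := by rw [← hi00]; exact hi0
  -- the a i with i < n are nonzero
  have haNZ : ∀ i : Fin (n + 1), (i : ℕ) < n → a i ≠ 0 := by
    intro i hi h0
    have h1 : Associated (0 : K) (a i) := by rw [h0]
    have h2 : Associated (0 : K) (a ⟨n, by omega⟩) := by rw [haN]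
    have h3 := idxEq h1 h2
    rw [Fin.ext_iff] at h3
    have h4 : (i : ℕ) = n := h3
    omega
  have h1v : ((1 : Fin (n + 1)) : ℕ) = 1 := by
    rw [Fin.val_one', Nat.mod_eq_of_lt (by omega)]
  set t := a 1 with htdef
  -- t = a 1 is not a unit
  have htnu : ¬IsUnit t := by
    intro hu
    have hlt : (⟨0, by omega⟩ : Fin (n + 1)) < 1 := by
      rw [Fin.lt_def]
      show 0 < ((1 : Fin (n + 1)) : ℕ)
      omega
    have hss := hchain _ _ hlt
    rw [Set.ssubset_def] at hss
    apply hss.2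
    intro z hz
    have hz0 : z = 0 := (hu.mul_right_eq_zero).mp hz
    show a _ * z = 0
    rw [hz0, mul_zero]
  -- unit minus nonunit is a unit
  have hsubU : ∀ u c : K, IsUnit u → ¬IsUnit c → IsUnit (u - c) := by
    intro u c hu hc
    by_contra h
    have := IsLocalRing.nonunits_add (mem_nonunits_iff.2 h) (mem_nonunits_iff.2 hc)
    rw [sub_add_cancel] at this
    exact this hu
  -- multiplying a nonzero element by a nonunit strictly increases the index
  have hstep : ∀ (c x : K) (i j : Fin (n + 1)), ¬IsUnit c → x ≠ 0 →
      Associated x (a i) → Associated (c * x) (a j) → i < j := by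
    intro c x i j hc hx hxi hcj
    have hle : i ≤ j := idxLe hxi hcj (by
      intro z hz
      have : c * x * z = c * (x * z) := by ring
      rw [this, hz, mul_zero])
    rcases lt_or_eq_of_le hle with h | h
    · exact h
    · exfalso
      have hcj' : Associated (a i) (c * x) := by rw [h]; exact hcj.symm
      obtain ⟨u, hu⟩ := hxi.trans hcj'
      have hx0 : x * (↑u - c) = 0 := by rw [mul_sub, hu]; ring
      have hun : IsUnit ((↑u : K) - c) := hsubU _ _ u.isUnit hc
      exact hx ((hun.mul_left_eq_zero).mp hx0)
  -- a 1 * a (n-1) = 0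
  have hkey1 : t * a ⟨n - 1, by omega⟩ = 0 := by
    obtain ⟨j, hj⟩ := hcover (t * a ⟨n - 1, by omega⟩)
    have hlt : (⟨n - 1, by omega⟩ : Fin (n + 1)) < j :=
      hstep t (a ⟨n - 1, by omega⟩) _ j htnu (haNZ _ (by show n - 1 < n; omega))
        (Associated.refl _) hj
    have hisLt := j.isLt
    have hltv : n - 1 < (j : ℕ) := hlt
    have hjv : j = (⟨n, by omega⟩ : Fin (n + 1)) := Fin.ext (by show (j : ℕ) = n; omega)
    rw [hjv, haN] at hj
    exact hzero hj.symm
  -- the annihilator of a (n-1) is exactly the set of nonunits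
  have hannN1 : ∀ z : K, a ⟨n - 1, by omega⟩ * z = 0 ↔ ¬IsUnit z := by
    intro z
    constructor
    · intro h hz
      obtain ⟨u, hu⟩ := hz
      apply haNZ ⟨n - 1, by omega⟩ (by show n - 1 < n; omega)
      rw [← hu] at h
      exact (u.isUnit.mul_left_eq_zero).mp h
    · intro hz
      obtain ⟨j, hj⟩ := hcover z
      have hj0 : (j : ℕ) ≠ 0 := by
        intro h
        have hje0 : j = ⟨0, by omega⟩ := Fin.ext h
        rw [hje0] at hj
        have hun : IsUnit (a ⟨0, by omega⟩) := associated_one_iff_isUnit.mp ha0assoc.symm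
        exact hz (hj.symm.isUnit hun)
      have haj : a j * a ⟨n - 1, by omega⟩ = 0 := by
        have h1j : (1 : Fin (n + 1)) ≤ j := by
          rw [Fin.le_def, h1v]; omega
        exact annMono h1j _ hkey1
      obtain ⟨u, hu⟩ := hj.symm
      rw [← hu]
      calc a ⟨n - 1, by omega⟩ * (a j * ↑u) = a j * a ⟨n - 1, by omega⟩ * ↑u := by ring
      _ = 0 := by rw [haj, zero_mul]
  -- every element killed by t is a multiple of a (n-1)
  have hannT : ∀ z : K, t * z = 0 → ∃ c : K, a ⟨n - 1, by omega⟩ * c = z := by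
    intro z hz
    by_cases hz0 : z = 0
    · exact ⟨0, by rw [mul_zero, hz0]⟩
    have hcz := hcover z
    obtain ⟨j, hj⟩ := hcz
    obtain ⟨u, hu⟩ := hj
    have haj1 : a j * t = 0 := by
      rw [← hu]
      calc z * ↑u * t = t * z * ↑u := by ring
      _ = 0 := by rw [hz, zero_mul]
    have hisLt := j.isLt
    have hjn : (j : ℕ) ≠ n := by
      intro h
      have hje : j = ⟨n, by omega⟩ := Fin.ext h
      rw [hje, haN] at hu
      exact hz0 ((u.isUnit.mul_left_eq_zero).mp hu)
    have hjge : n - 1 ≤ (j : ℕ) := by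
      by_contra h
      push_neg at h
      -- then n ≥ 2 and j ≤ n - 2
      have hn2t : a ⟨n - 2, by omega⟩ * t = 0 := by
        have hle : j ≤ (⟨n - 2, by omega⟩ : Fin (n + 1)) := by
          rw [Fin.le_def]
          show (j : ℕ) ≤ n - 2
          omega
        exact annMono hle _ haj1
      have hlt3 : (⟨n - 2, by omega⟩ : Fin (n + 1)) < ⟨n - 1, by omega⟩ := by
        rw [Fin.lt_def]
        show n - 2 < n - 1
        omega
      have hss := hchain _ _ hlt3
      rw [Set.ssubset_def] at hss
      apply hss.2
      intro w hw
      have hwnu : ¬IsUnit w := (hannN1 w).mp hw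
      obtain ⟨k, hk⟩ := hcover w
      have hk0 : (k : ℕ) ≠ 0 := by
        intro hkk
        have hke : k = ⟨0, by omega⟩ := Fin.ext hkk
        rw [hke] at hk
        have hun : IsUnit (a ⟨0, by omega⟩) := associated_one_iff_isUnit.mp ha0assoc.symm
        obtain ⟨v, hv⟩ := hk.symm
        exact hwnu (by rw [← hv]; exact (hun.mul (v.isUnit)))
      have hak : a k * a ⟨n - 2, by omega⟩ = 0 := by
        have h1k : (1 : Fin (n + 1)) ≤ k := by rw [Fin.le_def, h1v]; omega
        rw [mul_comm] at hn2t
        exact annMono h1k _ hn2t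
      obtain ⟨v, hv⟩ := hk.symm
      show a ⟨n - 2, by omega⟩ * w = 0
      rw [← hv]
      calc a ⟨n - 2, by omega⟩ * (a k * ↑v) = a k * a ⟨n - 2, by omega⟩ * ↑v := by ring
      _ = 0 := by rw [hak, zero_mul]
    have hje : j = ⟨n - 1, by omega⟩ := Fin.ext (by show (j : ℕ) = n - 1; omega)
    rw [hje] at hu
    refine ⟨↑u⁻¹, ?_⟩
    rw [← hu, mul_assoc, Units.mul_inv, mul_one]
  -- counting
  have hcardeq : ∀ x : K,
      Nat.card ((AddMonoidHom.mulLeft x).range : Set K) *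
        Nat.card ((AddMonoidHom.mulLeft x).ker : Set K) = Nat.card K := by
    intro x
    have h1 : Nat.card K = Nat.card (K ⧸ (AddMonoidHom.mulLeft x).ker) *
        Nat.card (AddMonoidHom.mulLeft x).ker :=
      AddSubgroup.card_eq_card_quotient_mul_card_addSubgroup _
    have h2 : Nat.card (K ⧸ (AddMonoidHom.mulLeft x).ker) =
        Nat.card (AddMonoidHom.mulLeft x).range :=
      Nat.card_congr (QuotientAddGroup.quotientKerEquivRange _).toEquiv
    rw [h1, h2]
    rfl
  set f := AddMonoidHom.mulLeft t with hfdef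
  set g := AddMonoidHom.mulLeft (a ⟨n - 1, by omega⟩) with hgdef
  have hsub1 : (f.range : Set K) ⊆ {z : K | ¬IsUnit z} := by
    rintro z ⟨c, rfl⟩
    intro hu
    exact htnu (isUnit_of_mul_isUnit_left hu)
  have hsub2 : (f.ker : Set K) ⊆ (g.range : Set K) := by
    intro z hz
    have hz' : t * z = 0 := hz
    obtain ⟨c, hc⟩ := hannT z hz'
    exact ⟨c, hc⟩
  have hkerg : (g.ker : Set K) = {z : K | ¬IsUnit z} := by
    ext z
    exact hannN1 z
  -- positivity of the cards
  have hpos : ∀ s : AddSubgroup K, 0 < Nat.card (s : Set K) := by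
    intro s
    have : Nonempty (s : Set K) := ⟨⟨0, s.zero_mem⟩⟩
    exact Nat.card_pos
  have hAB := hcardeq t
  have hCD := hcardeq (a ⟨n - 1, by omega⟩)
  rw [← hfdef] at hAB
  rw [← hgdef] at hCD
  have hineq1 : Nat.card (f.range : Set K) ≤ Nat.card (g.ker : Set K) := by
    rw [hkerg]
    exact Nat.card_mono (Set.toFinite _) hsub1
  have hineq2 : Nat.card (f.ker : Set K) ≤ Nat.card (g.range : Set K) :=
    Nat.card_mono (Set.toFinite _) hsub2
  have hADeq : Nat.card (f.range : Set K) = Nat.card (g.ker : Set K) := by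
    have h1 : Nat.card (f.range : Set K) * Nat.card (f.ker : Set K) ≤
        Nat.card (g.ker : Set K) * Nat.card (f.ker : Set K) :=
      Nat.mul_le_mul_right _ hineq1
    have h2 : Nat.card (g.ker : Set K) * Nat.card (f.ker : Set K) ≤
        Nat.card (g.ker : Set K) * Nat.card (g.range : Set K) :=
      Nat.mul_le_mul_left _ hineq2
    have h3 : Nat.card (g.ker : Set K) * Nat.card (g.range : Set K) = Nat.card K := by
      rw [Nat.mul_comm]; exact hCD
    have h4 : Nat.card (f.range : Set K) * Nat.card (f.ker : Set K) =
        Nat.card (g.ker : Set K) * Nat.card (f.ker : Set K) := by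
      omega
    exact Nat.eq_of_mul_eq_mul_right (hpos f.ker) h4
  have hrangeEq : (f.range : Set K) = {z : K | ¬IsUnit z} := by
    apply Set.eq_of_subset_of_ncard_le hsub1
    rw [← Nat.card_coe_set_eq, ← Nat.card_coe_set_eq, ← hkerg]
    rw [hADeq]
  -- every nonunit is a multiple of t
  have hm : ∀ z : K, ¬IsUnit z → ∃ c : K, t * c = z := by
    intro z hz
    have : z ∈ (f.range : Set K) := by rw [hrangeEq]; exact hz
    obtain ⟨c, hc⟩ := this
    exact ⟨c, hc⟩
  -- t is nilpotent
  have hnil : ∃ N : ℕ, t ^ N = 0 := by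
    have hgen : ∀ p q : ℕ, p < q → t ^ p = t ^ q → ∃ N, t ^ N = 0 := by
      intro p q h he
      refine ⟨p, ?_⟩
      have h2 : t ^ p * (1 - t ^ (q - p)) = 0 := by
        rw [mul_sub, mul_one, ← pow_add, Nat.add_sub_cancel' h.le]
        exact sub_eq_zero.mpr he
      have hu : IsUnit (1 - t ^ (q - p)) := by
        apply hsubU _ _ isUnit_one
        intro hu2
        apply htnu
        obtain ⟨k, hk⟩ : ∃ k, q - p = k + 1 := ⟨q - p - 1, by omega⟩
        rw [hk, pow_succ'] at hu2
        exact isUnit_of_mul_isUnit_left hu2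
      exact (hu.mul_left_eq_zero).mp h2
    obtain ⟨p, q, hpq, hpow⟩ := Finite.exists_ne_map_eq_of_infinite (fun k : ℕ => t ^ k)
    rcases lt_or_gt_of_ne hpq with h | h
    · exact hgen _ _ h hpow
    · exact hgen _ _ h hpow.symm
  obtain ⟨N, hN⟩ := hnil
  -- every nonzero element is associated to a power of t
  have hpowAssoc : ∀ x : K, x ≠ 0 → ∃ k : ℕ, Associated (t ^ k) x := by
    have key : ∀ d : ℕ, ∀ x : K, x ≠ 0 → t ^ (N - d) ∣ x → ∃ k, Associated (t ^ k) x := by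
      intro d
      induction d with
      | zero =>
        intro x hx hdvd
        exfalso
        apply hx
        obtain ⟨c, hc⟩ := hdvd
        rw [hc, Nat.sub_zero, hN, zero_mul]
      | succ d ih =>
        intro x hx hdvd
        obtain ⟨c, hc⟩ := hdvd
        by_cases hu : IsUnit c
        · obtain ⟨u, hu'⟩ := hu
          exact ⟨N - (d + 1), ⟨u, by rw [hu']; exact hc.symm⟩⟩
        · obtain ⟨e, he⟩ := hm c hu
          apply ih x hx
          have hdvd2 : t ^ (N - (d + 1) + 1) ∣ x :=
            ⟨e, by rw [hc, ← he, pow_succ]; ring⟩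
          exact dvd_trans (pow_dvd_pow t (by omega)) hdvd2
    intro x hx
    exact key N x hx (by rw [Nat.sub_self, pow_zero]; exact one_dvd x)
  -- the main induction: t ^ M is associated to a M
  have main : ∀ M : ℕ, ∀ hM : M ≤ n, Associated (t ^ M) (a ⟨M, by omega⟩) := by
    intro M
    induction M using Nat.strong_induction_on with
    | _ M ih =>
      intro hM
      cases M with
      | zero =>
        rw [pow_zero]
        exact ha0assoc
      | succ M' =>
        have hM' : M' ≤ n := by omega
        have ihM' := ih M' (by omega) hM'
        have htM'ne : t ^ M' ≠ 0 := by
          intro h0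
          rw [h0] at ihM'
          have h2 : Associated (0 : K) (a ⟨n, by omega⟩) := by rw [haN]
          have h3 := idxEq ihM' h2
          rw [Fin.ext_iff] at h3
          have h4 : M' = n := h3
          omega
        obtain ⟨j, hj⟩ := hcover (t ^ (M' + 1))
        have hj' : Associated (t * t ^ M') (a j) := by rw [← pow_succ']; exact hj
        have hlt : (⟨M', by omega⟩ : Fin (n + 1)) < j :=
          hstep t (t ^ M') _ j htnu htM'ne ihM' hj'
        have hisLt := j.isLt
        have hltv : M' < (j : ℕ) := hlt
        have hjle : (j : ℕ) ≤ M' + 1 := by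
          by_cases hc : M' + 1 = n
          · omega
          · have hMn : M' + 1 < n := by omega
            obtain ⟨c, hc'⟩ := hpowAssoc (a ⟨M' + 1, by omega⟩)
              (haNZ _ (by show M' + 1 < n; omega))
            have hcge : M' + 1 ≤ c := by
              by_contra hcc
              push_neg at hcc
              have hic := ih c (by omega) (by omega)
              have heq := idxEq hic hc'
              rw [Fin.ext_iff] at heq
              have heq2 : c = M' + 1 := heq
              omega
            have hsub : ∀ z : K, t ^ (M' + 1) * z = 0 → t ^ c * z = 0 := by
              intro z hz
              obtain ⟨e, he⟩ : t ^ (M' + 1) ∣ t ^ c := pow_dvd_pow t hcge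
              rw [he]
              calc t ^ (M' + 1) * e * z = t ^ (M' + 1) * z * e := by ring
              _ = 0 := by rw [hz, zero_mul]
            have hle2 := idxLe hj hc' hsub
            exact hle2
        have hje : j = ⟨M' + 1, by omega⟩ := Fin.ext (by show (j : ℕ) = M' + 1; omega)
        rw [hje] at hj
        exact hj
  have goal1 : ∀ i : Fin (n + 1), Associated (a i) (t ^ (i : ℕ)) := by
    intro i
    have hile : (i : ℕ) ≤ n := by omega
    have h := main (i : ℕ) hile
    have heq : (⟨(i : ℕ), by omega⟩ : Fin (n + 1)) = i := Fin.ext rfl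
    rw [heq] at h
    exact h.symm
  have htn0 : t ^ n = 0 := by
    have h := main n le_rfl
    rw [haN] at h
    exact hzero h.symm
  refine ⟨goal1, ?_⟩
  intro I
  have hex : ∃ k : ℕ, t ^ k ∈ I := ⟨n, by rw [htn0]; exact I.zero_mem⟩
  refine ⟨Nat.find hex, ?_⟩
  apply le_antisymm
  · intro x hx
    by_cases hx0 : x = 0
    · rw [hx0]; exact Ideal.zero_mem _
    · obtain ⟨c, hc⟩ := hpowAssoc x hx0
      obtain ⟨u, hu⟩ := hc
      have htc : t ^ c ∈ I := by
        have heq : t ^ c = x * ↑u⁻¹ := by rw [← hu, mul_assoc, Units.mul_inv, mul_one]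
        rw [heq]
        exact I.mul_mem_right _ hx
      have hk : Nat.find hex ≤ c := Nat.find_min' hex htc
      rw [Ideal.mem_span_singleton]
      exact dvd_trans (pow_dvd_pow t hk) ⟨↑u, hu.symm⟩
  · rw [Ideal.span_le, Set.singleton_subset_iff]
    exact Nat.find_spec hex
end
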